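/- For any tree T on at least 2 vertices and any vertex v of T, I(T−v; −1) · I(T−N[v]; −1) ∈ {0, 1}. -/

import Mathlib

open Polynomial

open Classical in
/-- The independence polynomial of a graph: `∑ₖ sₖ xᵏ` where `sₖ` is the number of
independent (stable) sets of cardinality `k`. -/
noncomputable def indPoly {V : Type*} [Fintype V] (G : SimpleGraph V) : Polynomial ℤ :=
  ∑ s : Finset V, if ∀ u ∈ s, ∀ v ∈ s, ¬ G.Adj u v then Polynomial.X ^ s.card else 0
open Classical in
/-- Sum of `(-1)^|s|` over independent subsets `s` of `A`. -/
noncomputable def negsum {V : Type*} (G : SimpleGraph V) (A : Finset V) : ℤ :=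
  ∑ s ∈ A.powerset, if ∀ u ∈ s, ∀ v ∈ s, ¬ G.Adj u v then (-1 : ℤ) ^ s.card else 0

open Classical in
lemma indPoly_eval_induce {V : Type*} (G : SimpleGraph V) (S : Set V) [Fintype ↥S] :
    (indPoly (G.induce S)).eval (-1) = negsum G S.toFinset := by
  classical
  rw [indPoly, eval_finset_sum]
  rw [negsum, ← Finset.powerset_univ]
  refine Finset.sum_bij (fun s _ => s.map (Function.Embedding.subtype _)) ?_ ?_ ?_ ?_
  · intro s _
    simp only [Finset.mem_powerset]
    intro x hx
    simp only [Finset.mem_map, Function.Embedding.coe_subtype] at hx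
    obtain ⟨y, _, rfl⟩ := hx
    simpa using y.2
  · intro s _ t _ h
    exact Finset.map_injective _ h
  · intro t ht
    simp only [Finset.mem_powerset] at ht
    refine ⟨t.subtype (· ∈ S), Finset.mem_powerset.mpr (Finset.subset_univ _), ?_⟩
    show (t.subtype (· ∈ S)).map (Function.Embedding.subtype _) = t
    rw [Finset.subtype_map]
    exact Finset.filter_true_of_mem (fun x hx => by simpa using ht hx)
  · intro s _
    have hcard : (s.map (Function.Embedding.subtype _)).card = s.card := Finset.card_map _
    have hcond : (∀ u ∈ s.map (Function.Embedding.subtype _),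
        ∀ v ∈ s.map (Function.Embedding.subtype _), ¬ G.Adj u v) ↔
        (∀ u ∈ s, ∀ v ∈ s, ¬ (G.induce S).Adj u v) := by
      constructor
      · intro h u hu v hv hadj
        exact h u (Finset.mem_map_of_mem _ hu) v (Finset.mem_map_of_mem _ hv) hadj
      · intro h u hu v hv hadj
        simp only [Finset.mem_map, Function.Embedding.coe_subtype] at hu hv
        obtain ⟨x, hx, rfl⟩ := hu
        obtain ⟨y, hy, rfl⟩ := hv
        exact h x hx y hy hadj
    by_cases h : ∀ u ∈ s, ∀ v ∈ s, ¬ (G.induce S).Adj u v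
    · rw [if_pos h, if_pos (hcond.mpr h), hcard]
      simp
    · rw [if_neg h, if_neg (fun hc => h (hcond.mp hc))]
      simp

open Classical in
lemma negsum_rec {V : Type*} (G : SimpleGraph V) (A : Finset V) (v : V) (hv : v ∈ A) :
    negsum G A = negsum G (A.erase v)
      - negsum G (A.filter (fun u => u ≠ v ∧ ¬ G.Adj v u)) := by
  classical
  set B := A.erase v with hB
  have hvB : v ∉ B := Finset.notMem_erase _ _
  have hA : A = insert v B := (Finset.insert_erase hv).symm
  set C := A.filter (fun u => u ≠ v ∧ ¬ G.Adj v u) with hC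
  have hCB : C ⊆ B := by
    intro x hx
    simp only [hC, Finset.mem_filter] at hx
    exact Finset.mem_erase.mpr ⟨hx.2.1, hx.1⟩
  have key : negsum G A = negsum G B + ∑ t ∈ B.powerset,
      (if ∀ u ∈ insert v t, ∀ w ∈ insert v t, ¬ G.Adj u w then
        (-1 : ℤ) ^ (insert v t).card else 0) := by
    rw [negsum, hA, Finset.powerset_insert, Finset.sum_union, Finset.sum_image]
    · rfl
    · intro t ht t' ht' h
      simp only [Finset.coe_powerset, Set.mem_preimage, Set.mem_powerset_iff, Finset.coe_subset, Finset.mem_coe, Finset.mem_powerset] at ht ht'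
      have h1 : v ∉ t := fun hc => hvB (ht hc)
      have h2 : v ∉ t' := fun hc => hvB (ht' hc)
      rw [← Finset.erase_insert h1, ← Finset.erase_insert h2, h]
    · rw [Finset.disjoint_left]
      intro t ht hti
      simp only [Finset.mem_image, Finset.mem_powerset] at hti
      obtain ⟨t', _, rfl⟩ := hti
      exact hvB (Finset.mem_powerset.mp ht (Finset.mem_insert_self _ _))
  have step : ∀ t ∈ B.powerset,
      (if ∀ u ∈ insert v t, ∀ w ∈ insert v t, ¬ G.Adj u w then
        (-1 : ℤ) ^ (insert v t).card else 0)
      = -(if (∀ u ∈ t, ∀ w ∈ t, ¬ G.Adj u w) ∧ (∀ u ∈ t, ¬ G.Adj v u) then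
        (-1 : ℤ) ^ t.card else 0) := by
    intro t ht
    have hvt : v ∉ t := fun hc => hvB (Finset.mem_powerset.mp ht hc)
    have hiff : (∀ u ∈ insert v t, ∀ w ∈ insert v t, ¬ G.Adj u w) ↔
        (∀ u ∈ t, ∀ w ∈ t, ¬ G.Adj u w) ∧ (∀ u ∈ t, ¬ G.Adj v u) := by
      constructor
      · intro h
        exact ⟨fun u hu w hw => h u (Finset.mem_insert_of_mem hu) w (Finset.mem_insert_of_mem hw),
          fun u hu => h v (Finset.mem_insert_self _ _) u (Finset.mem_insert_of_mem hu)⟩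
      · rintro ⟨h1, h2⟩ u hu w hw
        rcases Finset.mem_insert.mp hu with h | hu <;>
          rcases Finset.mem_insert.mp hw with h' | hw
        · exact fun had => G.loopless.irrefl v (by rwa [h, h'] at had)
        · exact fun had => h2 w hw (by rwa [h] at had)
        · exact fun had => h2 u hu (by rw [h'] at had; exact had.symm)
        · exact h1 u hu w hw
    rw [Finset.card_insert_of_notMem hvt]
    by_cases h : ∀ u ∈ insert v t, ∀ w ∈ insert v t, ¬ G.Adj u w
    · rw [if_pos h, if_pos (hiff.mp h)]
      ring
    · rw [if_neg h, if_neg (fun hc => h (hiff.mpr hc))]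
      ring
  rw [key, Finset.sum_congr rfl step, Finset.sum_neg_distrib]
  have sumC : ∑ t ∈ B.powerset,
      (if (∀ u ∈ t, ∀ w ∈ t, ¬ G.Adj u w) ∧ (∀ u ∈ t, ¬ G.Adj v u) then
        (-1 : ℤ) ^ t.card else 0) = negsum G C := by
    rw [negsum]
    rw [← Finset.sum_subset (Finset.powerset_mono.mpr hCB)]
    · refine Finset.sum_congr rfl ?_
      intro t ht
      have htC : t ⊆ C := Finset.mem_powerset.mp ht
      have h2 : ∀ u ∈ t, ¬ G.Adj v u := fun u hu =>
        (Finset.mem_filter.mp (htC hu)).2.2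
      by_cases h : ∀ u ∈ t, ∀ w ∈ t, ¬ G.Adj u w
      · rw [if_pos ⟨h, h2⟩, if_pos h]
      · rw [if_neg (fun hc => h hc.1), if_neg h]
    · intro t ht htC
      simp only [Finset.mem_powerset] at ht htC
      rw [if_neg]
      rintro ⟨-, h2⟩
      apply htC
      intro x hx
      have hxB := ht hx
      exact Finset.mem_filter.mpr ⟨Finset.mem_of_mem_erase hxB,
        (Finset.mem_erase.mp hxB).1, h2 x hx⟩
  rw [sumC]
  ring

open Classical in
lemma exists_leaf {V : Type*} (T : SimpleGraph V) (hconn : T.Connected)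
    (hacyc : T.IsAcyclic) (A : Finset V) (hA : A.Nonempty) :
    ∃ u ∈ A, (A.filter (T.Adj u)).card ≤ 1 := by
  classical
  obtain ⟨r, hr⟩ := hA
  obtain ⟨u, huA, hmax⟩ := Finset.exists_max_image A (fun x => T.dist r x) ⟨r, hr⟩
  refine ⟨u, huA, Finset.card_le_one.mpr ?_⟩
  intro w1 hw1 w2 hw2
  by_contra hne
  obtain ⟨hw1A, hadj1⟩ := Finset.mem_filter.mp hw1
  obtain ⟨hw2A, hadj2⟩ := Finset.mem_filter.mp hw2
  -- shortest walks avoid u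
  have keyw : ∀ (w : V), T.Adj u w → w ∈ A →
      ∃ q : T.Walk r w, q.length = T.dist r w ∧ u ∉ q.support := by
    intro w hw hwA
    obtain ⟨q, hq⟩ := hconn.exists_walk_length_eq_dist r w
    refine ⟨q, hq, ?_⟩
    intro hus
    have h1 : T.dist r u ≤ (q.takeUntil u hus).length := SimpleGraph.dist_le _
    have h2 : (q.takeUntil u hus).length + (q.dropUntil u hus).length = q.length := by
      rw [← SimpleGraph.Walk.length_append, SimpleGraph.Walk.take_spec]
    have h3 : (q.dropUntil u hus).length ≠ 0 := fun h0 =>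
      hw.ne (SimpleGraph.Walk.eq_of_length_eq_zero h0)
    have h4 : T.dist r w ≤ T.dist r u := hmax w hwA
    omega
  obtain ⟨q1, hq1, hu1⟩ := keyw w1 hadj1 hw1A
  obtain ⟨q2, hq2, hu2⟩ := keyw w2 hadj2 hw2A
  -- path through u
  have hne1 : w1 ≠ u := hadj1.ne.symm
  have hne2 : u ≠ w2 := hadj2.ne
  have hp1 : (SimpleGraph.Walk.cons hadj1.symm
      (SimpleGraph.Walk.cons hadj2 SimpleGraph.Walk.nil)).IsPath := by
    simp [SimpleGraph.Walk.isPath_def, hne1, hne2, hne]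
  -- path avoiding u
  set W := q1.reverse.append q2 with hW
  have huW : u ∉ W.support := by
    rw [hW, SimpleGraph.Walk.mem_support_append_iff]
    rintro (h | h)
    · rw [SimpleGraph.Walk.support_reverse, List.mem_reverse] at h
      exact hu1 h
    · exact hu2 h
  have huP2 : u ∉ (W.toPath : T.Walk w1 w2).support :=
    fun h => huW (SimpleGraph.Walk.support_toPath_subset W h)
  have := SimpleGraph.isAcyclic_iff_path_unique.mp hacyc ⟨_, hp1⟩ W.toPath
  apply huP2
  rw [← this]
  simp

open Classical in
lemma negsum_mem {V : Type*} (T : SimpleGraph V) (hconn : T.Connected)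
    (hacyc : T.IsAcyclic) (A : Finset V) : negsum T A ∈ ({-1, 0, 1} : Set ℤ) := by
  classical
  induction A using Finset.strongInductionOn with
  | _ A ih =>
  rcases Finset.eq_empty_or_nonempty A with rfl | hA
  · simp [negsum]
  obtain ⟨u, huA, hcard⟩ := exists_leaf T hconn hacyc A hA
  have hrec := negsum_rec T A u huA
  interval_cases h : (A.filter (T.Adj u)).card
  · -- no neighbors in A
    have hCe : A.filter (fun x => x ≠ u ∧ ¬ T.Adj u x) = A.erase u := by
      ext x
      simp only [Finset.mem_filter, Finset.mem_erase]
      constructor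
      · rintro ⟨hx, hxu, -⟩; exact ⟨hxu, hx⟩
      · rintro ⟨hxu, hx⟩
        refine ⟨hx, hxu, fun hadj => ?_⟩
        have : x ∈ A.filter (T.Adj u) := Finset.mem_filter.mpr ⟨hx, hadj⟩
        rw [Finset.card_eq_zero.mp h] at this
        exact absurd this (Finset.notMem_empty x)
    rw [hCe, sub_self] at hrec
    rw [hrec]
    simp
  · -- exactly one neighbor w
    obtain ⟨w, hw⟩ := Finset.card_eq_one.mp h
    have hwmem : w ∈ A.filter (T.Adj u) := hw ▸ Finset.mem_singleton_self w
    obtain ⟨hwA, hadjw⟩ := Finset.mem_filter.mp hwmem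
    have hwu : w ≠ u := hadjw.ne.symm
    have hCe : A.filter (fun x => x ≠ u ∧ ¬ T.Adj u x) = (A.erase u).erase w := by
      ext x
      simp only [Finset.mem_filter, Finset.mem_erase]
      constructor
      · rintro ⟨hx, hxu, hnadj⟩
        refine ⟨fun hxw => ?_, hxu, hx⟩
        subst hxw
        exact hnadj hadjw
      · rintro ⟨hxw, hxu, hx⟩
        refine ⟨hx, hxu, fun hadj => ?_⟩
        have : x ∈ A.filter (T.Adj u) := Finset.mem_filter.mpr ⟨hx, hadj⟩
        rw [hw, Finset.mem_singleton] at this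
        exact hxw this
    have hwB : w ∈ A.erase u := Finset.mem_erase.mpr ⟨hwu, hwA⟩
    have hrec2 := negsum_rec T (A.erase u) w hwB
    rw [hCe, hrec2] at hrec
    have hD : (A.erase u).filter (fun x => x ≠ w ∧ ¬ T.Adj w x) ⊂ A := by
      refine Finset.ssubset_of_subset_of_ssubset (Finset.filter_subset _ _) ?_
      exact Finset.erase_ssubset huA
    have := ih _ hD
    have key : negsum T A =
        - negsum T ((A.erase u).filter (fun x => x ≠ w ∧ ¬ T.Adj w x)) := by
      rw [hrec]; ring
    rw [key]
    rcases this with h1 | h1 | h1 <;> rw [h1] <;> simp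

open Classical in
theorem indPoly_tree_deletion_product {V : Type*} [Fintype V] (T : SimpleGraph V)
    (hconn : T.Connected) (hacyc : T.IsAcyclic) (hV : 2 ≤ Fintype.card V) (v : V) :
    (indPoly (T.induce {u | u ≠ v})).eval (-1) *
      (indPoly (T.induce ({v} ∪ T.neighborSet v)ᶜ)).eval (-1) ∈ ({0, 1} : Set ℤ) := by
  classical
  have e1 : ({u | u ≠ v} : Set V).toFinset = Finset.univ.erase v := by
    ext x; simp [eq_comm]
  have e2 : (({v} ∪ T.neighborSet v)ᶜ : Set V).toFinset
      = Finset.univ.filter (fun u => u ≠ v ∧ ¬ T.Adj v u) := by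
    ext x
    rw [Set.mem_toFinset]
    simp [SimpleGraph.neighborSet]
  rw [indPoly_eval_induce T ({u | u ≠ v} : Set V), indPoly_eval_induce T (({v} ∪ T.neighborSet v)ᶜ : Set V), e1, e2]
  have hrec := negsum_rec T Finset.univ v (Finset.mem_univ v)
  have ha := negsum_mem T hconn hacyc (Finset.univ.erase v)
  have hb := negsum_mem T hconn hacyc
    (Finset.univ.filter (fun u => u ≠ v ∧ ¬ T.Adj v u))
  have hab := negsum_mem T hconn hacyc Finset.univ
  rw [hrec] at hab
  simp only [Set.mem_insert_iff, Set.mem_singleton_iff] at ha hb hab ⊢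
  rcases ha with h | h | h <;> rcases hb with h' | h' | h' <;>
    rw [h, h'] at hab ⊢ <;> norm_num at hab <;> norm_num
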